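/- arXiv:1710.01149 — 3 statements merged into one kernel-verified Lean document; each statement's English description precedes it below -/
import Mathlib

section
/- Consider the discrete string ρ = Σ_{j=1}^n m_j δ_{x_j} with 0 < x_1 < ⋯ < x_n < 1, m_j > 0, and the k-th flow ẋ_j = (−1)^{k+1} G_k(x_j,x_j), ṁ_j = (−1)^k m_j ⟨G_{k,x}(x,x)⟩(x = x_j). These equations are Hamiltonian with respect to the canonical bracket {x_i, m_j} = δ_{ij} (and {x_i,x_j}={m_i,m_j}=0), with Hamiltonian H^{(k)} = ((−1)^{k+1}/(k+1)) Σ_{i=1}^n m_i G_k(x_i, x_i). -/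
open Finset

/-- The symmetric piecewise-affine kernel `G₀(s,t) = c(min(s,t))·ĉ(max(s,t))`
with `c(u) = c₁u + c₀`, `ĉ(u) = d₁u + d₀` (the Robin Green's function of `D_x²`). -/
noncomputable def grKer (c₁ c₀ d₁ d₀ : ℝ) (s t : ℝ) : ℝ :=
  (c₁ * min s t + c₀) * (d₁ * max s t + d₀)

/-- The arithmetic mean `⟨G₀ₓ(x,t)⟩(x = s)` of the one-sided `x`-derivatives of
`G₀(x,t)` at `x = s`. -/
noncomputable def avgDx (c₁ c₀ d₁ d₀ : ℝ) (s t : ℝ) : ℝ :=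
  if s < t then c₁ * (d₁ * t + d₀)
  else if t < s then (c₁ * t + c₀) * d₁
  else (c₁ * (d₁ * s + d₀) + (c₁ * s + c₀) * d₁) / 2

/-- Product of kernel values `G(q₀,q₁)G(q₁,q₂)⋯G(q_{k-1},q_k)` along a path `q`. -/
noncomputable def pathProd (G : ℝ → ℝ → ℝ) (k : ℕ) (q : Fin (k+1) → ℝ) : ℝ :=
  ∏ l : Fin k, G (q l.castSucc) (q l.succ)

/-- The discrete iterated kernel
`G_k(s,t) = ∑_{i₁,…,i_k} m_{i_k}⋯m_{i_1} G₀(s,x_{i_k})⋯G₀(x_{i_1},t)`. -/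
noncomputable def greenIter (G : ℝ → ℝ → ℝ) (n k : ℕ) (X M : Fin n → ℝ)
    (s t : ℝ) : ℝ :=
  ∑ i : Fin k → Fin n, (∏ l, M (i l)) *
    pathProd G (k+1) (Fin.cons s (Fin.snoc (X ∘ i) t))

/-- The Hamiltonian `H^(k) = ((-1)^{k+1}/(k+1)) ∑ᵢ mᵢ G_k(xᵢ,xᵢ)`. -/
noncomputable def HamF (G : ℝ → ℝ → ℝ) (n k : ℕ) (X M : Fin n → ℝ) : ℝ :=
  ((-1:ℝ)^(k+1) / ((k:ℝ)+1)) * ∑ j, M j * greenIter G n k X M (X j) (X j)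

/-- The averaged derivative `⟨G_{k,x}(x,x)⟩(x = s)` of the diagonal of `G_k`:
the derivative hits either the first kernel factor `G₀(x,ξ_k)` or the last one
`G₀(ξ_1,x)`, and one-sided derivatives of `G₀` are averaged. -/
noncomputable def avgDiagGk (c₁ c₀ d₁ d₀ : ℝ) (n k : ℕ) (X M : Fin n → ℝ)
    (s : ℝ) : ℝ :=
  ∑ i : Fin k → Fin n, (∏ l, M (i l)) *
    (avgDx c₁ c₀ d₁ d₀ s ((Fin.snoc (X ∘ i) s : Fin (k+1) → ℝ) 0)
        * pathProd (grKer c₁ c₀ d₁ d₀) k (Fin.snoc (X ∘ i) s)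
      + pathProd (grKer c₁ c₀ d₁ d₀) k (Fin.cons s (X ∘ i))
        * avgDx c₁ c₀ d₁ d₀ s ((Fin.cons s (X ∘ i) : Fin (k+1) → ℝ) (Fin.last k)))

namespace DSF


noncomputable def cycP (G : ℝ → ℝ → ℝ) {n : ℕ} (k : ℕ) (X : Fin n → ℝ)
    (t : Fin (k+1) → Fin n) : ℝ :=
  ∏ l : Fin (k+1), G (X (t l)) (X (t (l + 1)))

lemma prod_erase_zero {k : ℕ} (f : Fin (k+1) → ℝ) :
    ∏ q ∈ univ.erase (0 : Fin (k+1)), f q = ∏ l : Fin k, f l.succ := by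
  rw [Fin.univ_succ, Finset.erase_cons, Finset.prod_map]
  rfl

lemma prod_erase_last {k : ℕ} (f : Fin (k+1) → ℝ) :
    ∏ q ∈ univ.erase (Fin.last k), f q = ∏ l : Fin k, f l.castSucc := by
  rw [Fin.univ_castSuccEmb, Finset.erase_cons, Finset.prod_map]
  rfl

lemma prod_shift {k : ℕ} (p : Fin (k+1)) (f : Fin (k+1) → ℝ) :
    ∏ q : Fin (k+1), f (q + p) = ∏ q : Fin (k+1), f q :=
  Fintype.prod_equiv (Equiv.addRight p) _ _ (fun _ => rfl)

lemma prod_erase_shift {k : ℕ} (a p : Fin (k+1)) (f : Fin (k+1) → ℝ) :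
    ∏ q ∈ univ.erase a, f (q + p) = ∏ q ∈ univ.erase (a + p), f q := by
  refine Finset.prod_equiv (Equiv.addRight p) ?_ ?_
  · intro q
    simp [Finset.mem_erase, add_left_inj]
  · intro q _
    rfl

lemma sum_rot {n k : ℕ} (σ : Equiv.Perm (Fin (k+1))) (F : (Fin (k+1) → Fin n) → ℝ) :
    ∑ t : Fin (k+1) → Fin n, F (t ∘ σ) = ∑ t : Fin (k+1) → Fin n, F t :=
  Fintype.sum_equiv (Equiv.arrowCongr σ.symm (Equiv.refl (Fin n))) _ _ (fun _ => rfl)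

lemma sum_decomp {n k : ℕ} (F : (Fin (k+1) → Fin n) → ℝ) :
    ∑ t : Fin (k+1) → Fin n, F t
      = ∑ j : Fin n, ∑ i : Fin k → Fin n, F (Fin.cons j i) := by
  rw [← Equiv.sum_comp (Fin.consEquiv fun _ => Fin n) F, Fintype.sum_prod_type]
  rfl

lemma cyc_rot {n k : ℕ} (G : ℝ → ℝ → ℝ) (X : Fin n → ℝ) (p : Fin (k+1))
    (t : Fin (k+1) → Fin n) :
    cycP G k X (t ∘ (Equiv.addRight p)) = cycP G k X t := by
  unfold cycP
  rw [← prod_shift p (fun q => G (X (t q)) (X (t (q + 1))))]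
  refine Finset.prod_congr rfl fun l _ => ?_
  simp only [Function.comp_apply, Equiv.coe_addRight]
  rw [add_right_comm]

lemma snoc_eq {n k : ℕ} (Z : Fin n → ℝ) (j : Fin n) (i : Fin k → Fin n) (m : Fin (k+1)) :
    (Fin.snoc (Z ∘ i) (Z j) : Fin (k+1) → ℝ) m = Z ((Fin.cons j i : Fin (k+1) → Fin n) (m + 1)) := by
  induction m using Fin.lastCases with
  | last => simp [Fin.snoc_last, Fin.last_add_one]
  | cast m => rw [Fin.snoc_castSucc, Fin.coeSucc_eq_succ]; simp

lemma cons_eq {n k : ℕ} (Z : Fin n → ℝ) (j : Fin n) (i : Fin k → Fin n) (m : Fin (k+1)) :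
    (Fin.cons (Z j) (Z ∘ i) : Fin (k+1) → ℝ) m = Z ((Fin.cons j i : Fin (k+1) → Fin n) m) := by
  induction m using Fin.cases with
  | zero => simp
  | succ m => simp

lemma bridge1 {n k : ℕ} (G : ℝ → ℝ → ℝ) (Z : Fin n → ℝ) (j : Fin n) (i : Fin k → Fin n) :
    pathProd G (k+1) (Fin.cons (Z j) (Fin.snoc (Z ∘ i) (Z j))) =
      cycP G k Z (Fin.cons j i) := by
  unfold pathProd cycP
  refine Finset.prod_congr rfl fun l _ => ?_
  congr 1
  · induction l using Fin.cases with
    | zero => simp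
    | succ m => rw [← Fin.succ_castSucc, Fin.cons_succ, Fin.snoc_castSucc]; simp
  · rw [Fin.cons_succ, snoc_eq]

lemma bridge2 {n k : ℕ} (G : ℝ → ℝ → ℝ) (Z : Fin n → ℝ) (j : Fin n) (i : Fin k → Fin n) :
    pathProd G k (Fin.snoc (Z ∘ i) (Z j)) =
      ∏ q ∈ univ.erase (0 : Fin (k+1)),
        G (Z ((Fin.cons j i : Fin (k+1) → Fin n) q)) (Z ((Fin.cons j i : Fin (k+1) → Fin n) (q + 1))) := by
  rw [prod_erase_zero]
  unfold pathProd
  refine Finset.prod_congr rfl fun l _ => ?_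
  rw [snoc_eq, snoc_eq, Fin.coeSucc_eq_succ]

lemma bridge3 {n k : ℕ} (G : ℝ → ℝ → ℝ) (Z : Fin n → ℝ) (j : Fin n) (i : Fin k → Fin n) :
    pathProd G k (Fin.cons (Z j) (Z ∘ i)) =
      ∏ q ∈ univ.erase (Fin.last k),
        G (Z ((Fin.cons j i : Fin (k+1) → Fin n) q)) (Z ((Fin.cons j i : Fin (k+1) → Fin n) (q + 1))) := by
  rw [prod_erase_last]
  unfold pathProd
  refine Finset.prod_congr rfl fun l _ => ?_
  rw [cons_eq, cons_eq, Fin.coeSucc_eq_succ]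



lemma prod_cons_M {n k : ℕ} (M : Fin n → ℝ) (j : Fin n) (i : Fin k → Fin n) :
    (∏ p : Fin (k+1), M ((Fin.cons j i : Fin (k+1) → Fin n) p))
      = M j * ∏ l, M (i l) := by
  rw [Fin.prod_univ_succ]
  simp

lemma ham_eq {n : ℕ} (k : ℕ) (G : ℝ → ℝ → ℝ) (X M : Fin n → ℝ) :
    HamF G n k X M = ((-1:ℝ)^(k+1) / ((k:ℝ)+1)) *
      ∑ t : Fin (k+1) → Fin n, (∏ p, M (t p)) * cycP G k X t := by
  unfold HamF greenIter
  congr 1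
  rw [sum_decomp (fun t => (∏ p, M (t p)) * cycP G k X t)]
  refine Finset.sum_congr rfl fun j _ => ?_
  rw [Finset.mul_sum]
  refine Finset.sum_congr rfl fun i _ => ?_
  rw [bridge1 G X j i, prod_cons_M]
  ring

lemma gi_eq {n : ℕ} (k : ℕ) (G : ℝ → ℝ → ℝ) (X M : Fin n → ℝ) (j : Fin n) :
    greenIter G n k X M (X j) (X j)
      = ∑ i : Fin k → Fin n, (∏ l, M (i l)) * cycP G k X (Fin.cons j i) := by
  unfold greenIter
  refine Finset.sum_congr rfl fun i _ => ?_
  rw [bridge1 G X j i]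

lemma count_m {n k : ℕ} (G : ℝ → ℝ → ℝ) (X M : Fin n → ℝ) (j : Fin n) (hMj : M j ≠ 0) :
    ∑ t : Fin (k+1) → Fin n,
        (∑ p : Fin (k+1), (∏ q ∈ univ.erase p, M (t q)) * (if t p = j then (1:ℝ) else 0))
          * cycP G k X t
      = ((k:ℝ)+1) * ∑ i : Fin k → Fin n, (∏ l, M (i l)) * cycP G k X (Fin.cons j i) := by
  have hstep : ∀ t : Fin (k+1) → Fin n,
      (∑ p : Fin (k+1), (∏ q ∈ univ.erase p, M (t q)) * (if t p = j then (1:ℝ) else 0))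
          * cycP G k X t
      = ∑ p : Fin (k+1),
          (if t p = j then ((∏ q, M (t q)) / M j) * cycP G k X t else 0) := by
    intro t
    rw [Finset.sum_mul]
    refine Finset.sum_congr rfl fun p _ => ?_
    by_cases h : t p = j
    · rw [if_pos h, if_pos h, mul_one]
      congr 1
      rw [eq_div_iff hMj, ← h, Finset.prod_erase_mul univ _ (Finset.mem_univ p)]
    · rw [if_neg h, if_neg h, mul_zero, zero_mul]
  simp_rw [hstep]
  rw [Finset.sum_comm]
  have hrot : ∀ p : Fin (k+1),
      (∑ t : Fin (k+1) → Fin n,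
        (if t p = j then ((∏ q, M (t q)) / M j) * cycP G k X t else 0))
      = ∑ t : Fin (k+1) → Fin n,
        (if t 0 = j then ((∏ q, M (t q)) / M j) * cycP G k X t else 0) := by
    intro p
    rw [← sum_rot (Equiv.addRight p)
      (fun t => if t 0 = j then ((∏ q, M (t q)) / M j) * cycP G k X t else 0)]
    refine Finset.sum_congr rfl fun t _ => ?_
    have h0 : (t ∘ (Equiv.addRight p)) 0 = t p := by
      simp only [Function.comp_apply, Equiv.coe_addRight, zero_add]
    have hP : (∏ q, M ((t ∘ (Equiv.addRight p)) q)) = ∏ q, M (t q) :=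
      prod_shift p (fun q => M (t q))
    rw [h0, hP, cyc_rot]
  simp_rw [hrot]
  rw [Finset.sum_const, Finset.card_univ, Fintype.card_fin, nsmul_eq_mul]
  push_cast
  congr 1
  rw [sum_decomp (fun t => if t 0 = j then ((∏ q, M (t q)) / M j) * cycP G k X t else 0)]
  have : ∀ j' : Fin n,
      (∑ i : Fin k → Fin n,
        (if (Fin.cons j' i : Fin (k+1) → Fin n) 0 = j
          then ((∏ q, M ((Fin.cons j' i : Fin (k+1) → Fin n) q)) / M j)
            * cycP G k X (Fin.cons j' i) else 0))
      = if j' = j then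
          (∑ i : Fin k → Fin n, (∏ l, M (i l)) * cycP G k X (Fin.cons j i)) else 0 := by
    intro j'
    by_cases h : j' = j
    · subst h
      rw [if_pos rfl]
      refine Finset.sum_congr rfl fun i _ => ?_
      rw [if_pos (Fin.cons_zero _ _), prod_cons_M, mul_comm (M j') (∏ l, M (i l)),
        mul_div_assoc, div_self hMj, mul_one]
    · simp [Fin.cons_zero, h]
  simp_rw [this]
  rw [Finset.sum_ite_eq' univ j]
  simp


lemma affine_deriv (a b : ℝ) (x : ℝ) : HasDerivAt (fun s => a * s + b) a x := by
  simpa using ((hasDerivAt_id x).const_mul a).add_const b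

lemma fac_deriv {n : ℕ} (c₁ c₀ d₁ d₀ : ℝ) (X : Fin n → ℝ) (hX : StrictMono X)
    (j a b : Fin n) :
    HasDerivAt (fun s => grKer c₁ c₀ d₁ d₀ (Function.update X j s a) (Function.update X j s b))
      ((if a = j then avgDx c₁ c₀ d₁ d₀ (X j) (X b) else 0) +
       (if b = j then avgDx c₁ c₀ d₁ d₀ (X j) (X a) else 0)) (X j) := by
  by_cases ha : a = j <;> by_cases hb : b = j
  · -- both equal j
    have hfun : (fun s => grKer c₁ c₀ d₁ d₀ (Function.update X j s a)
        (Function.update X j s b)) = fun s => (c₁ * s + c₀) * (d₁ * s + d₀) := by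
      funext s
      rw [ha, hb, Function.update_self, grKer, min_self, max_self]
    rw [hfun, if_pos ha, if_pos hb, hb, ha]
    have := (affine_deriv c₁ c₀ (X j)).fun_mul (affine_deriv d₁ d₀ (X j))
    refine this.congr_deriv ?_
    simp only [avgDx, lt_irrefl, if_false]
    ring
  · -- a = j, b ≠ j
    have hne : X b ≠ X j := fun h => hb (hX.injective h)
    rw [if_pos ha, if_neg hb, add_zero]
    rcases hne.lt_or_gt with hlt | hgt
    · -- X b < X j
      have haff : HasDerivAt (fun s => (c₁ * X b + c₀) * (d₁ * s + d₀))
          ((c₁ * X b + c₀) * d₁) (X j) := by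
        simpa [mul_comm] using (affine_deriv d₁ d₀ (X j)).const_mul (c₁ * X b + c₀)
      have heq : (fun s => grKer c₁ c₀ d₁ d₀ (Function.update X j s a)
          (Function.update X j s b)) =ᶠ[nhds (X j)]
          fun s => (c₁ * X b + c₀) * (d₁ * s + d₀) := by
        refine Filter.eventuallyEq_of_mem (Ioi_mem_nhds hlt) fun s hs => ?_
        have hs' : X b < s := hs
        rw [ha, Function.update_self, Function.update_of_ne hb, grKer,
          min_eq_right hs'.le, max_eq_left hs'.le]
      refine (haff.congr_of_eventuallyEq heq).congr_deriv ?_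
      rw [avgDx, if_neg (not_lt.2 hlt.le), if_pos hlt]
    · -- X j < X b
      have haff : HasDerivAt (fun s => (c₁ * s + c₀) * (d₁ * X b + d₀))
          (c₁ * (d₁ * X b + d₀)) (X j) := by
        simpa [mul_comm, mul_assoc] using (affine_deriv c₁ c₀ (X j)).mul_const (d₁ * X b + d₀)
      have heq : (fun s => grKer c₁ c₀ d₁ d₀ (Function.update X j s a)
          (Function.update X j s b)) =ᶠ[nhds (X j)]
          fun s => (c₁ * s + c₀) * (d₁ * X b + d₀) := by
        refine Filter.eventuallyEq_of_mem (Iio_mem_nhds hgt) fun s hs => ?_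
        have hs' : s < X b := hs
        rw [ha, Function.update_self, Function.update_of_ne hb, grKer,
          min_eq_left hs'.le, max_eq_right hs'.le]
      refine (haff.congr_of_eventuallyEq heq).congr_deriv ?_
      rw [avgDx, if_pos hgt]
  · -- b = j, a ≠ j
    have hne : X a ≠ X j := fun h => ha (hX.injective h)
    rw [if_neg ha, if_pos hb, zero_add]
    rcases hne.lt_or_gt with hlt | hgt
    · -- X a < X j
      have haff : HasDerivAt (fun s => (c₁ * X a + c₀) * (d₁ * s + d₀))
          ((c₁ * X a + c₀) * d₁) (X j) := by
        simpa [mul_comm] using (affine_deriv d₁ d₀ (X j)).const_mul (c₁ * X a + c₀)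
      have heq : (fun s => grKer c₁ c₀ d₁ d₀ (Function.update X j s a)
          (Function.update X j s b)) =ᶠ[nhds (X j)]
          fun s => (c₁ * X a + c₀) * (d₁ * s + d₀) := by
        refine Filter.eventuallyEq_of_mem (Ioi_mem_nhds hlt) fun s hs => ?_
        have hs' : X a < s := hs
        rw [hb, Function.update_self, Function.update_of_ne ha, grKer,
          min_eq_left hs'.le, max_eq_right hs'.le]
      refine (haff.congr_of_eventuallyEq heq).congr_deriv ?_
      rw [avgDx, if_neg (not_lt.2 hlt.le), if_pos hlt]
    · -- X j < X a
      have haff : HasDerivAt (fun s => (c₁ * s + c₀) * (d₁ * X a + d₀))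
          (c₁ * (d₁ * X a + d₀)) (X j) := by
        simpa [mul_comm, mul_assoc] using (affine_deriv c₁ c₀ (X j)).mul_const (d₁ * X a + d₀)
      have heq : (fun s => grKer c₁ c₀ d₁ d₀ (Function.update X j s a)
          (Function.update X j s b)) =ᶠ[nhds (X j)]
          fun s => (c₁ * s + c₀) * (d₁ * X a + d₀) := by
        refine Filter.eventuallyEq_of_mem (Iio_mem_nhds hgt) fun s hs => ?_
        have hs' : s < X a := hs
        rw [hb, Function.update_self, Function.update_of_ne ha, grKer,
          min_eq_right hs'.le, max_eq_left hs'.le]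
      refine (haff.congr_of_eventuallyEq heq).congr_deriv ?_
      rw [avgDx, if_pos hgt]
  · -- neither
    rw [if_neg ha, if_neg hb, add_zero]
    have heq : (fun s => grKer c₁ c₀ d₁ d₀ (Function.update X j s a)
        (Function.update X j s b)) =ᶠ[nhds (X j)]
        fun _ => grKer c₁ c₀ d₁ d₀ (X a) (X b) :=
      Filter.Eventually.of_forall fun s => by
        simp only [Function.update_of_ne ha, Function.update_of_ne hb]
    exact (hasDerivAt_const (X j) _).congr_of_eventuallyEq heq


section


variable {n k : ℕ} (c₁ c₀ d₁ d₀ : ℝ)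

/-- abbreviation for the erased cyclic product -/
noncomputable def eraP (X : Fin n → ℝ) (t : Fin (k+1) → Fin n) (p : Fin (k+1)) : ℝ :=
  ∏ q ∈ univ.erase p, grKer c₁ c₀ d₁ d₀ (X (t q)) (X (t (q + 1)))

lemma eraP_rot (X : Fin n → ℝ) (t : Fin (k+1) → Fin n) (a p : Fin (k+1)) :
    eraP c₁ c₀ d₁ d₀ X (t ∘ (Equiv.addRight p)) a = eraP c₁ c₀ d₁ d₀ X t (a + p) := by
  unfold eraP
  rw [← prod_erase_shift a p (fun q => grKer c₁ c₀ d₁ d₀ (X (t q)) (X (t (q + 1))))]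
  refine Finset.prod_congr rfl fun q _ => ?_
  simp only [Function.comp_apply, Equiv.coe_addRight]
  rw [add_right_comm]

lemma count_x (X M : Fin n → ℝ) (j : Fin n) :
    ∑ t : Fin (k+1) → Fin n, (∏ p, M (t p)) *
        (∑ p : Fin (k+1),
          (eraP c₁ c₀ d₁ d₀ X t p) *
          ((if t p = j then avgDx c₁ c₀ d₁ d₀ (X j) (X (t (p+1))) else 0) +
           (if t (p+1) = j then avgDx c₁ c₀ d₁ d₀ (X j) (X (t p)) else 0)))
      = ((k:ℝ)+1) * (M j * avgDiagGk c₁ c₀ d₁ d₀ n k X M (X j)) := by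
  have hsplit : ∀ t : Fin (k+1) → Fin n, (∏ p, M (t p)) *
        (∑ p : Fin (k+1),
          (eraP c₁ c₀ d₁ d₀ X t p) *
          ((if t p = j then avgDx c₁ c₀ d₁ d₀ (X j) (X (t (p+1))) else 0) +
           (if t (p+1) = j then avgDx c₁ c₀ d₁ d₀ (X j) (X (t p)) else 0)))
      = (∑ p : Fin (k+1), (if t p = j then
            (∏ p, M (t p)) * avgDx c₁ c₀ d₁ d₀ (X j) (X (t (p+1)))
              * eraP c₁ c₀ d₁ d₀ X t p else 0))
        + (∑ p : Fin (k+1), (if t (p+1) = j then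
            (∏ p, M (t p)) * avgDx c₁ c₀ d₁ d₀ (X j) (X (t p))
              * eraP c₁ c₀ d₁ d₀ X t p else 0)) := by
    intro t
    rw [Finset.mul_sum, ← Finset.sum_add_distrib]
    refine Finset.sum_congr rfl fun p _ => ?_
    split_ifs with h1 h2 h2 <;> ring
  simp_rw [hsplit]
  rw [Finset.sum_add_distrib, Finset.sum_comm
    (f := fun t (p : Fin (k+1)) => (if t p = j then
      (∏ p, M (t p)) * avgDx c₁ c₀ d₁ d₀ (X j) (X (t (p+1)))
        * eraP c₁ c₀ d₁ d₀ X t p else 0)),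
    Finset.sum_comm
    (f := fun t (p : Fin (k+1)) => (if t (p+1) = j then
      (∏ p, M (t p)) * avgDx c₁ c₀ d₁ d₀ (X j) (X (t p))
        * eraP c₁ c₀ d₁ d₀ X t p else 0))]
  have hrotA : ∀ p : Fin (k+1),
      (∑ t : Fin (k+1) → Fin n, (if t p = j then
          (∏ q, M (t q)) * avgDx c₁ c₀ d₁ d₀ (X j) (X (t (p+1)))
            * eraP c₁ c₀ d₁ d₀ X t p else 0))
      = ∑ t : Fin (k+1) → Fin n, (if t 0 = j then
          (∏ q, M (t q)) * avgDx c₁ c₀ d₁ d₀ (X j) (X (t 1))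
            * eraP c₁ c₀ d₁ d₀ X t 0 else 0) := by
    intro p
    rw [← sum_rot (Equiv.addRight p)
      (fun t => if t 0 = j then (∏ q, M (t q)) * avgDx c₁ c₀ d₁ d₀ (X j) (X (t 1))
            * eraP c₁ c₀ d₁ d₀ X t 0 else 0)]
    refine Finset.sum_congr rfl fun t _ => ?_
    have h0 : (t ∘ (Equiv.addRight p)) 0 = t p := by
      simp only [Function.comp_apply, Equiv.coe_addRight, zero_add]
    have h1 : (t ∘ (Equiv.addRight p)) 1 = t (p + 1) := by
      simp only [Function.comp_apply, Equiv.coe_addRight]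
      rw [add_comm]
    have hP : (∏ q, M ((t ∘ (Equiv.addRight p)) q)) = ∏ q, M (t q) :=
      prod_shift p (fun q => M (t q))
    rw [h0, h1, hP, eraP_rot, zero_add]
  have hrotB : ∀ p : Fin (k+1),
      (∑ t : Fin (k+1) → Fin n, (if t (p+1) = j then
          (∏ q, M (t q)) * avgDx c₁ c₀ d₁ d₀ (X j) (X (t p))
            * eraP c₁ c₀ d₁ d₀ X t p else 0))
      = ∑ t : Fin (k+1) → Fin n, (if t 0 = j then
          (∏ q, M (t q)) * avgDx c₁ c₀ d₁ d₀ (X j) (X (t (Fin.last k)))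
            * eraP c₁ c₀ d₁ d₀ X t (Fin.last k) else 0) := by
    intro p
    rw [← sum_rot (Equiv.addRight (p + 1))
      (fun t => if t 0 = j then (∏ q, M (t q))
            * avgDx c₁ c₀ d₁ d₀ (X j) (X (t (Fin.last k)))
            * eraP c₁ c₀ d₁ d₀ X t (Fin.last k) else 0)]
    refine Finset.sum_congr rfl fun t _ => ?_
    have hlp : Fin.last k + (p + 1) = p := by
      rw [add_comm p 1, ← add_assoc, Fin.last_add_one, zero_add]
    have h0 : (t ∘ (Equiv.addRight (p+1))) 0 = t (p + 1) := by
      simp only [Function.comp_apply, Equiv.coe_addRight, zero_add]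
    have h1 : (t ∘ (Equiv.addRight (p+1))) (Fin.last k) = t p := by
      simp only [Function.comp_apply, Equiv.coe_addRight]
      rw [hlp]
    have hP : (∏ q, M ((t ∘ (Equiv.addRight (p+1))) q)) = ∏ q, M (t q) := by
      simp only [Function.comp_apply, Equiv.coe_addRight]
      exact prod_shift (p+1) (fun q => M (t q))
    rw [h0, h1, hP, eraP_rot, hlp]
  simp_rw [hrotA, hrotB]
  rw [Finset.sum_const, Finset.sum_const, Finset.card_univ, Fintype.card_fin,
    nsmul_eq_mul, nsmul_eq_mul, ← mul_add]
  push_cast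
  congr 1
  -- now the slices
  rw [sum_decomp (fun t => if t 0 = j then
        (∏ q, M (t q)) * avgDx c₁ c₀ d₁ d₀ (X j) (X (t 1))
          * eraP c₁ c₀ d₁ d₀ X t 0 else 0),
    sum_decomp (fun t => if t 0 = j then
        (∏ q, M (t q)) * avgDx c₁ c₀ d₁ d₀ (X j) (X (t (Fin.last k)))
          * eraP c₁ c₀ d₁ d₀ X t (Fin.last k) else 0)]
  have hA : ∀ j' : Fin n,
      (∑ i : Fin k → Fin n, (if (Fin.cons j' i : Fin (k+1) → Fin n) 0 = j then
          (∏ q, M ((Fin.cons j' i : Fin (k+1) → Fin n) q))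
            * avgDx c₁ c₀ d₁ d₀ (X j) (X ((Fin.cons j' i : Fin (k+1) → Fin n) 1))
            * eraP c₁ c₀ d₁ d₀ X (Fin.cons j' i) 0 else 0))
      = if j' = j then (∑ i : Fin k → Fin n, (M j * ∏ l, M (i l))
          * (avgDx c₁ c₀ d₁ d₀ (X j) ((Fin.snoc (X ∘ i) (X j) : Fin (k+1) → ℝ) 0)
            * pathProd (grKer c₁ c₀ d₁ d₀) k (Fin.snoc (X ∘ i) (X j)))) else 0 := by
    intro j'
    by_cases h : j' = j
    · subst h
      rw [if_pos rfl]
      refine Finset.sum_congr rfl fun i _ => ?_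
      rw [if_pos (Fin.cons_zero _ _), prod_cons_M]
      have e1 : (Fin.snoc (X ∘ i) (X j') : Fin (k+1) → ℝ) 0
          = X ((Fin.cons j' i : Fin (k+1) → Fin n) 1) := by
        rw [snoc_eq X j' i 0, zero_add]
      have e2 : pathProd (grKer c₁ c₀ d₁ d₀) k (Fin.snoc (X ∘ i) (X j'))
          = eraP c₁ c₀ d₁ d₀ X (Fin.cons j' i) 0 := by
        rw [bridge2 (grKer c₁ c₀ d₁ d₀) X j' i]
        rfl
      rw [e1, e2]
      ring
    · simp [Fin.cons_zero, h]
  have hB : ∀ j' : Fin n,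
      (∑ i : Fin k → Fin n, (if (Fin.cons j' i : Fin (k+1) → Fin n) 0 = j then
          (∏ q, M ((Fin.cons j' i : Fin (k+1) → Fin n) q))
            * avgDx c₁ c₀ d₁ d₀ (X j) (X ((Fin.cons j' i : Fin (k+1) → Fin n) (Fin.last k)))
            * eraP c₁ c₀ d₁ d₀ X (Fin.cons j' i) (Fin.last k) else 0))
      = if j' = j then (∑ i : Fin k → Fin n, (M j * ∏ l, M (i l))
          * (pathProd (grKer c₁ c₀ d₁ d₀) k (Fin.cons (X j) (X ∘ i))
            * avgDx c₁ c₀ d₁ d₀ (X j)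
              ((Fin.cons (X j) (X ∘ i) : Fin (k+1) → ℝ) (Fin.last k)))) else 0 := by
    intro j'
    by_cases h : j' = j
    · subst h
      rw [if_pos rfl]
      refine Finset.sum_congr rfl fun i _ => ?_
      rw [if_pos (Fin.cons_zero _ _), prod_cons_M]
      have e1 : (Fin.cons (X j') (X ∘ i) : Fin (k+1) → ℝ) (Fin.last k)
          = X ((Fin.cons j' i : Fin (k+1) → Fin n) (Fin.last k)) := cons_eq X j' i _
      have e2 : pathProd (grKer c₁ c₀ d₁ d₀) k (Fin.cons (X j') (X ∘ i))
          = eraP c₁ c₀ d₁ d₀ X (Fin.cons j' i) (Fin.last k) := by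
        rw [bridge3 (grKer c₁ c₀ d₁ d₀) X j' i]
        rfl
      rw [e1, e2]
      ring
    · simp [Fin.cons_zero, h]
  simp_rw [hA, hB]
  rw [Finset.sum_ite_eq' univ j, Finset.sum_ite_eq' univ j]
  simp only [Finset.mem_univ, if_pos]
  unfold avgDiagGk
  rw [Finset.mul_sum, ← Finset.sum_add_distrib]
  refine Finset.sum_congr rfl fun i _ => ?_
  ring


end

end DSF

/-- The equations `ẋⱼ = (-1)^{k+1} G_k(xⱼ,xⱼ)`,
`ṁⱼ = (-1)^k mⱼ ⟨G_{k,x}(x,x)⟩(x = xⱼ)` of the `k`-th flow of a discrete string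
are Hamiltonian for the canonical bracket `{xᵢ,mⱼ} = δᵢⱼ` with Hamiltonian
`H^(k) = ((-1)^{k+1}/(k+1)) ∑ᵢ mᵢ G_k(xᵢ,xᵢ)`; that is,
`∂H^(k)/∂mⱼ = (-1)^{k+1} G_k(xⱼ,xⱼ)` and
`-∂H^(k)/∂xⱼ = (-1)^k mⱼ ⟨G_{k,x}(x,x)⟩(x = xⱼ)`. -/
theorem discrete_string_flow_hamiltonian (n k : ℕ) (c₁ c₀ d₁ d₀ : ℝ)
    (X M : Fin n → ℝ) (hX : StrictMono X)
    (hX01 : ∀ j, X j ∈ Set.Ioo (0:ℝ) 1) (hM : ∀ j, 0 < M j) :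
    (∀ j : Fin n,
      HasDerivAt (fun s => HamF (grKer c₁ c₀ d₁ d₀) n k X (Function.update M j s))
        ((-1:ℝ)^(k+1) * greenIter (grKer c₁ c₀ d₁ d₀) n k X M (X j) (X j)) (M j)) ∧
    (∀ j : Fin n,
      HasDerivAt (fun s => HamF (grKer c₁ c₀ d₁ d₀) n k (Function.update X j s) M)
        (-((-1:ℝ)^k * M j * avgDiagGk c₁ c₀ d₁ d₀ n k X M (X j))) (X j)) := by
  have hk : ((k:ℝ)+1) ≠ 0 := by positivity
  constructor
  · intro j
    have hMj : M j ≠ 0 := (hM j).ne'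
    have hfun : (fun s => HamF (grKer c₁ c₀ d₁ d₀) n k X (Function.update M j s)) =
        fun s => ((-1:ℝ)^(k+1) / ((k:ℝ)+1)) *
          ∑ t : Fin (k+1) → Fin n,
            (∏ p, Function.update M j s (t p)) * DSF.cycP (grKer c₁ c₀ d₁ d₀) k X t := by
      funext s
      exact DSF.ham_eq k (grKer c₁ c₀ d₁ d₀) X (Function.update M j s)
    rw [hfun]
    have hin : ∀ t ∈ (univ : Finset (Fin (k+1) → Fin n)),
        HasDerivAt (fun s => (∏ p, Function.update M j s (t p))
            * DSF.cycP (grKer c₁ c₀ d₁ d₀) k X t)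
          ((∑ p : Fin (k+1), (∏ q ∈ univ.erase p, M (t q)) * (if t p = j then (1:ℝ) else 0))
            * DSF.cycP (grKer c₁ c₀ d₁ d₀) k X t) (M j) := by
      intro t _
      refine HasDerivAt.mul_const ?_ _
      have hf : ∀ p ∈ (univ : Finset (Fin (k+1))),
          HasDerivAt (fun s => Function.update M j s (t p))
            (if t p = j then (1:ℝ) else 0) (M j) := by
        intro p _
        by_cases h : t p = j
        · rw [if_pos h]
          have e : (fun s => Function.update M j s (t p)) = fun s => s := by
            funext s; rw [h, Function.update_self]
          rw [e]; exact hasDerivAt_id' (M j)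
        · rw [if_neg h]
          have e : (fun s => Function.update M j s (t p)) = fun _ => M (t p) := by
            funext s; rw [Function.update_of_ne h]
          rw [e]; exact hasDerivAt_const _ _
      have hprod := HasDerivAt.fun_finsetProd hf
      convert hprod using 1
      refine Finset.sum_congr rfl fun p _ => ?_
      rw [smul_eq_mul]
      congr 1
      exact Finset.prod_congr rfl fun q _ => by rw [Function.update_eq_self]
    have hsum := (HasDerivAt.fun_sum hin).const_mul ((-1:ℝ)^(k+1) / ((k:ℝ)+1))
    refine hsum.congr_deriv ?_
    rw [DSF.count_m (grKer c₁ c₀ d₁ d₀) X M j hMj,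
      DSF.gi_eq k (grKer c₁ c₀ d₁ d₀) X M j]
    field_simp
  · intro j
    have hfun : (fun s => HamF (grKer c₁ c₀ d₁ d₀) n k (Function.update X j s) M) =
        fun s => ((-1:ℝ)^(k+1) / ((k:ℝ)+1)) *
          ∑ t : Fin (k+1) → Fin n,
            (∏ p, M (t p)) * DSF.cycP (grKer c₁ c₀ d₁ d₀) k (Function.update X j s) t := by
      funext s
      exact DSF.ham_eq k (grKer c₁ c₀ d₁ d₀) (Function.update X j s) M
    rw [hfun]
    have hin : ∀ t ∈ (univ : Finset (Fin (k+1) → Fin n)),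
        HasDerivAt (fun s => (∏ p, M (t p))
            * DSF.cycP (grKer c₁ c₀ d₁ d₀) k (Function.update X j s) t)
          ((∏ p, M (t p)) * (∑ p : Fin (k+1), DSF.eraP c₁ c₀ d₁ d₀ X t p *
            ((if t p = j then avgDx c₁ c₀ d₁ d₀ (X j) (X (t (p+1))) else 0) +
             (if t (p+1) = j then avgDx c₁ c₀ d₁ d₀ (X j) (X (t p)) else 0)))) (X j) := by
      intro t _
      refine HasDerivAt.const_mul _ ?_
      have hf : ∀ p ∈ (univ : Finset (Fin (k+1))),
          HasDerivAt (fun s => grKer c₁ c₀ d₁ d₀ (Function.update X j s (t p))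
              (Function.update X j s (t (p+1))))
            ((if t p = j then avgDx c₁ c₀ d₁ d₀ (X j) (X (t (p+1))) else 0) +
             (if t (p+1) = j then avgDx c₁ c₀ d₁ d₀ (X j) (X (t p)) else 0)) (X j) :=
        fun p _ => DSF.fac_deriv c₁ c₀ d₁ d₀ X hX j (t p) (t (p+1))
      have hprod := HasDerivAt.fun_finsetProd hf
      convert hprod using 1
      · rfl
      refine Finset.sum_congr rfl fun p _ => ?_
      rw [smul_eq_mul]
      congr 1
      unfold DSF.eraP
      refine Finset.prod_congr rfl fun q _ => ?_
      rw [Function.update_eq_self]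
    have hsum := (HasDerivAt.fun_sum hin).const_mul ((-1:ℝ)^(k+1) / ((k:ℝ)+1))
    refine hsum.congr_deriv ?_
    rw [DSF.count_x c₁ c₀ d₁ d₀ X M j]
    field_simp
    ring
end

section
/- With G_k(x_j,x_j) = Σ_{i_1,…,i_k} m_{i_k}⋯m_{i_1} G_0(x_j,x_{i_k}) G_0(x_{i_k},x_{i_{k−1}})⋯G_0(x_{i_1},x_j), the partial derivative with respect to m_l of H^{(k)} = ((−1)^{k+1}/(k+1)) Σ_i m_i G_k(x_i,x_i) equals (−1)^{k+1} G_k(x_l, x_l). -/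
open Finset

/-- Cyclic trace product along a closed path. -/
noncomputable def cyc (G : ℝ → ℝ → ℝ) (n k : ℕ) (X : Fin n → ℝ)
    (a : Fin (k+1) → Fin n) : ℝ :=
  ∏ p : Fin (k+1), G (X (a p)) (X (a (p+1)))

lemma pathProd_cons (G : ℝ → ℝ → ℝ) (n k : ℕ) (X : Fin n → ℝ) (j : Fin n)
    (i : Fin k → Fin n) :
    pathProd G (k+1) (Fin.cons (X j) (Fin.snoc (X ∘ i) (X j)))
      = cyc G n k X (Fin.cons j i) := by
  unfold pathProd cyc
  refine Finset.prod_congr rfl fun p _ => ?_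
  congr 1
  · induction p using Fin.cases with
    | zero => simp
    | succ m => simp [← Fin.succ_castSucc]
  · induction p using Fin.lastCases with
    | last => simp only [Fin.cons_succ, Fin.snoc_last, Fin.last_add_one, Fin.cons_zero]
    | cast m => simp [Fin.coeSucc_eq_succ, ← Fin.succ_castSucc]

lemma cyc_rot (G : ℝ → ℝ → ℝ) (n k : ℕ) (X : Fin n → ℝ)
    (a : Fin (k+1) → Fin n) (c : Fin (k+1)) :
    cyc G n k X (fun p => a (p + c)) = cyc G n k X a := by
  unfold cyc
  refine Fintype.prod_equiv (Equiv.addRight c) _ _ fun p => ?_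
  simp [add_right_comm]

lemma prod_rot (k : ℕ) (f : Fin (k+1) → ℝ) (c : Fin (k+1)) :
    ∏ p, f (p + c) = ∏ p, f p :=
  Fintype.prod_equiv (Equiv.addRight c) _ _ fun p => by simp

lemma prod_erase_rot (k : ℕ) (f : Fin (k+1) → ℝ) (p : Fin (k+1)) (hf : f p ≠ 0) :
    ∏ q ∈ univ.erase (0 : Fin (k+1)), f (q + p) = ∏ q ∈ univ.erase p, f q := by
  apply mul_left_cancel₀ hf
  have h1 : f p * ∏ q ∈ univ.erase (0 : Fin (k+1)), f (q + p)
      = ∏ q : Fin (k+1), f (q + p) := by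
    have := Finset.mul_prod_erase univ (fun q => f (q + p)) (mem_univ (0 : Fin (k+1)))
    simpa using this
  rw [h1, prod_rot]
  exact (Finset.mul_prod_erase univ f (mem_univ p)).symm

lemma prod_erase_zero (k : ℕ) (f : Fin (k+1) → ℝ) (hf : f 0 ≠ 0) :
    ∏ q ∈ univ.erase (0 : Fin (k+1)), f q = ∏ m : Fin k, f m.succ := by
  apply mul_left_cancel₀ hf
  rw [Finset.mul_prod_erase univ f (mem_univ 0), Fin.prod_univ_succ]

lemma mono_deriv (n k : ℕ) (M : Fin n → ℝ) (l : Fin n) (a : Fin (k+1) → Fin n) :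
    HasDerivAt (fun s => ∏ p : Fin (k+1), Function.update M l s (a p))
      (∑ p : Fin (k+1), (∏ q ∈ univ.erase p, M (a q)) * (if a p = l then 1 else 0))
      (M l) := by
  have h := HasDerivAt.fun_finsetProd (u := (univ : Finset (Fin (k+1))))
    (f := fun p s => Function.update M l s (a p))
    (f' := fun p => if a p = l then (1:ℝ) else 0) (x := M l) ?_
  · simpa [Function.update_eq_self, smul_eq_mul] using h
  · intro p _
    show HasDerivAt (fun s => Function.update M l s (a p)) (if a p = l then 1 else 0) (M l)
    rcases eq_or_ne (a p) l with h | h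
    · rw [if_pos h, show (fun s => Function.update M l s (a p)) = fun s => s from
        funext fun s => by rw [h, Function.update_self]]
      exact hasDerivAt_id (M l)
    · rw [if_neg h, show (fun s => Function.update M l s (a p)) = fun _ => M (a p) from
        funext fun s => Function.update_of_ne h _ _]
      exact hasDerivAt_const _ _

lemma hamF_eq (G : ℝ → ℝ → ℝ) (n k : ℕ) (X : Fin n → ℝ) (m : Fin n → ℝ) :
    HamF G n k X m = ((-1:ℝ)^(k+1) / ((k:ℝ)+1)) *
      ∑ a : Fin (k+1) → Fin n, (∏ p, m (a p)) * cyc G n k X a := by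
  unfold HamF greenIter
  congr 1
  rw [← Equiv.sum_comp (Fin.consEquiv (fun _ : Fin (k+1) => Fin n)), Fintype.sum_prod_type]
  refine Finset.sum_congr rfl fun j _ => ?_
  rw [Finset.mul_sum]
  refine Finset.sum_congr rfl fun i _ => ?_
  rw [pathProd_cons, show (Fin.consEquiv (fun _ : Fin (k+1) => Fin n)) (j, i)
    = Fin.cons j i from rfl]
  simp only [Fin.prod_univ_succ, Fin.cons_zero, Fin.cons_succ]
  ring

/-- For a fixed symmetric kernel `G₀` and fixed distinct points `x₁,…,xₙ`,
`∂H^(k)/∂m_l = (-1)^{k+1} G_k(x_l,x_l)`. -/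
theorem ham_m_derivative (n k : ℕ) (G₀ : ℝ → ℝ → ℝ)
    (hsymm : ∀ s t, G₀ s t = G₀ t s)
    (X : Fin n → ℝ) (hX : Function.Injective X)
    (M : Fin n → ℝ) (hM : ∀ j, 0 < M j) (l : Fin n) :
    HasDerivAt (fun s => HamF G₀ n k X (Function.update M l s))
      ((-1:ℝ)^(k+1) * greenIter G₀ n k X M (X l) (X l)) (M l) := by
  classical
  set c : ℝ := (-1:ℝ)^(k+1) / ((k:ℝ)+1) with hc
  set S : ℝ := ∑ i : Fin k → Fin n, (∏ q, M (i q)) * cyc G₀ n k X (Fin.cons l i) with hS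
  -- the raw derivative of the big polynomial
  have key : HasDerivAt
      (fun s => ∑ a : Fin (k+1) → Fin n,
        (∏ p, Function.update M l s (a p)) * cyc G₀ n k X a)
      (∑ a : Fin (k+1) → Fin n,
        (∑ p : Fin (k+1), (∏ q ∈ univ.erase p, M (a q)) * (if a p = l then 1 else 0))
          * cyc G₀ n k X a) (M l) :=
    HasDerivAt.fun_sum fun a _ => (mono_deriv n k M l a).mul_const _
  -- compute the derivative value
  have hval : (∑ a : Fin (k+1) → Fin n,
      (∑ p : Fin (k+1), (∏ q ∈ univ.erase p, M (a q)) * (if a p = l then 1 else 0))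
        * cyc G₀ n k X a) = ((k:ℝ)+1) * S := by
    have step1 : ∀ p : Fin (k+1),
        (∑ a : Fin (k+1) → Fin n,
          (∏ q ∈ univ.erase p, M (a q)) * (if a p = l then 1 else 0) * cyc G₀ n k X a)
        = ∑ b : Fin (k+1) → Fin n,
          (∏ q ∈ univ.erase (0:Fin (k+1)), M (b q)) * (if b 0 = l then 1 else 0)
            * cyc G₀ n k X b := by
      intro p
      refine Fintype.sum_equiv
        (Equiv.arrowCongr (Equiv.subRight p) (Equiv.refl (Fin n))) _ _ fun a => ?_
      have e_apply : ∀ q, (Equiv.arrowCongr (Equiv.subRight p) (Equiv.refl (Fin n))) a q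
          = a (q + p) := by intro q; simp [Equiv.arrowCongr, Equiv.subRight]
      have h0 : (Equiv.arrowCongr (Equiv.subRight p) (Equiv.refl (Fin n))) a 0 = a p := by
        rw [e_apply]; rw [zero_add]
      have hprod : ∏ q ∈ univ.erase (0:Fin (k+1)),
          M ((Equiv.arrowCongr (Equiv.subRight p) (Equiv.refl (Fin n))) a q)
          = ∏ q ∈ univ.erase p, M (a q) := by
        rw [Finset.prod_congr rfl fun q _ => by rw [e_apply]]
        exact prod_erase_rot k (fun q => M (a q)) p (hM (a p)).ne'
      have hcyc : cyc G₀ n k X ((Equiv.arrowCongr (Equiv.subRight p) (Equiv.refl (Fin n))) a)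
          = cyc G₀ n k X a := by
        have : ((Equiv.arrowCongr (Equiv.subRight p) (Equiv.refl (Fin n))) a)
            = fun q => a (q + p) := funext e_apply
        rw [this, cyc_rot]
      rw [hprod, h0, hcyc]
    calc (∑ a : Fin (k+1) → Fin n,
        (∑ p : Fin (k+1), (∏ q ∈ univ.erase p, M (a q)) * (if a p = l then 1 else 0))
          * cyc G₀ n k X a)
        = ∑ p : Fin (k+1), ∑ a : Fin (k+1) → Fin n,
            (∏ q ∈ univ.erase p, M (a q)) * (if a p = l then 1 else 0)
              * cyc G₀ n k X a := by
          rw [Finset.sum_comm]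
          exact Finset.sum_congr rfl fun a _ => by rw [Finset.sum_mul]
      _ = ∑ p : Fin (k+1), ∑ b : Fin (k+1) → Fin n,
            (∏ q ∈ univ.erase (0:Fin (k+1)), M (b q)) * (if b 0 = l then 1 else 0)
              * cyc G₀ n k X b :=
          Finset.sum_congr rfl fun p _ => step1 p
      _ = ((k:ℝ)+1) * S := by
          rw [Finset.sum_const, card_univ, Fintype.card_fin]
          have hinner : (∑ b : Fin (k+1) → Fin n,
              (∏ q ∈ univ.erase (0:Fin (k+1)), M (b q)) * (if b 0 = l then 1 else 0)
                * cyc G₀ n k X b) = S := by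
            rw [← Equiv.sum_comp (Fin.consEquiv (fun _ : Fin (k+1) => Fin n)),
              Fintype.sum_prod_type]
            have : ∀ j : Fin n, ∀ i : Fin k → Fin n,
                (∏ q ∈ univ.erase (0:Fin (k+1)), M ((Fin.cons j i : Fin (k+1) → Fin n) q))
                  * (if (Fin.cons j i : Fin (k+1) → Fin n) 0 = l then (1:ℝ) else 0)
                  * cyc G₀ n k X (Fin.cons j i)
                = if j = l then (∏ q, M (i q)) * cyc G₀ n k X (Fin.cons j i) else 0 := by
              intro j i
              rcases eq_or_ne j l with h | h
              · rw [prod_erase_zero k (fun q => M ((Fin.cons j i : Fin (k+1) → Fin n) q))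
                  (by simpa using (hM j).ne')]
                simp [h]
              · simp [h]
            simp only [show ∀ (j : Fin n) (i : Fin k → Fin n),
              (Fin.consEquiv (fun _ : Fin (k+1) => Fin n)) (j, i) = Fin.cons j i
              from fun _ _ => rfl, this]
            rw [hS]
            rw [Finset.sum_comm]
            refine Finset.sum_congr rfl fun i _ => ?_
            rw [Finset.sum_ite_eq' univ l
              (fun j => (∏ q, M (i q)) * cyc G₀ n k X (Fin.cons j i))]
            simp
          rw [hinner, nsmul_eq_mul]
          push_cast
          ring
  -- identify S with the Green function
  have hSg : S = greenIter G₀ n k X M (X l) (X l) := by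
    rw [hS]
    unfold greenIter
    exact Finset.sum_congr rfl fun i _ => by rw [pathProd_cons]
  -- rewrite the Hamiltonian
  have hfun : (fun s => HamF G₀ n k X (Function.update M l s))
      = fun s => c * ∑ a : Fin (k+1) → Fin n,
          (∏ p, Function.update M l s (a p)) * cyc G₀ n k X a := by
    funext s
    rw [hamF_eq]
  have hk1 : ((k:ℝ)+1) ≠ 0 := by positivity
  have final := key.const_mul c
  rw [← hfun] at final
  have : c * (∑ a : Fin (k+1) → Fin n,
      (∑ p : Fin (k+1), (∏ q ∈ univ.erase p, M (a q)) * (if a p = l then 1 else 0))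
        * cyc G₀ n k X a) = (-1:ℝ)^(k+1) * greenIter G₀ n k X M (X l) (X l) := by
    rw [hval, hSg, hc]
    field_simp
  rwa [this] at final
end

section
/- Consider the discrete string with masses m_1,…,m_n > 0 at points 0 < x_1 < ⋯ < x_n < 1, initial condition φ(x) = hx + 1 on [0, x_1) with h > 0, built piecewise linearly: on I_j = (x_j, x_{j+1}), φ = p_j(x − x_j) + q_j with p_0 = h, q_0 = 1, q_{j+1} = q_j + p_j l_j (continuity, l_j = x_{j+1} − x_j), and p_{j+1} = p_j − z m_{j+1} q_{j+1} (jump condition). Then the Weyl function W(z) = −φ(1;z)/φ_x(1;z) satisfies −W(−z) = l_n + 1/(z m_n + 1/(l_{n−1} + 1/(⋯ + 1/(l_0 + 1/h)))). -/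
/-- Finite continued fraction `1/(c₁ + 1/(c₂ + ⋯ ))` built from a list of entries. -/
noncomputable def cfracL : List ℝ → ℝ
  | [] => 0
  | c :: r => 1 / (c + cfracL r)

lemma ofFn_step (n : ℕ) (h z : ℝ) (m l : ℕ → ℝ) :
    List.ofFn (fun i : Fin (2*(n+1)+1) =>
        if (i:ℕ) = 2*(n+1) then h
        else if (i:ℕ) % 2 = 0 then z * m ((n+1) - (i:ℕ)/2)
        else l ((n+1) - 1 - (i:ℕ)/2))
    = (z * m (n+1)) :: l n :: List.ofFn (fun i : Fin (2*n+1) =>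
        if (i:ℕ) = 2*n then h
        else if (i:ℕ) % 2 = 0 then z * m (n - (i:ℕ)/2)
        else l (n - 1 - (i:ℕ)/2)) := by
  rw [show 2*(n+1)+1 = (2*n+1)+1+1 by ring]
  rw [List.ofFn_succ, List.ofFn_succ]
  have h2 : 2*(n+1) = (2*n+1)+1 := by ring
  refine congrArg₂ _ ?_ (congrArg₂ _ ?_ ?_)
  · simp [h2]
  · simp [h2, Nat.add_mod]
  · apply congrArg
    funext i
    have hi : ((i.succ.succ : Fin ((2*n+1)+1+1)) : ℕ) = (i : ℕ) + 2 := by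
      simp [Fin.val_succ]
    simp only [hi]
    have hlt : (i : ℕ) < 2*n+1 := i.isLt
    have e1 : ((i:ℕ)+2 = 2*(n+1)) ↔ ((i:ℕ) = 2*n) := by omega
    have e2 : ((i:ℕ)+2) % 2 = (i:ℕ) % 2 := by omega
    have e3 : ((i:ℕ)+2)/2 = (i:ℕ)/2 + 1 := by omega
    have e4 : (n+1) - ((i:ℕ)/2 + 1) = n - (i:ℕ)/2 := by omega
    have e5 : (n+1) - 1 - ((i:ℕ)/2 + 1) = n - 1 - (i:ℕ)/2 := by omega
    rw [e2, e3, e4, e5]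
    by_cases hc : (i:ℕ) = 2*n
    · rw [if_pos (show (i:ℕ)+2 = 2*(n+1) by omega), if_pos hc]
    · have : ¬ ((i:ℕ)+2 = 2*(n+1)) := fun hcon => hc (e1.mp hcon)
      simp [hc, this]

lemma key (h z : ℝ) (hh : 0 < h) (hz : 0 < z) (l m p q : ℕ → ℝ)
    (hp0 : p 0 = h) (hq0 : q 0 = 1)
    (hq : ∀ j, q (j+1) = q j + p j * l j)
    (hp : ∀ j, p (j+1) = p j + z * m (j+1) * q (j+1)) :
    ∀ n, (∀ j, 1 ≤ j → j ≤ n → 0 < m j) → (∀ j, j < n → 0 < l j) →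
      0 < p n ∧ 0 < q n ∧
      q n / p n = cfracL (List.ofFn (fun i : Fin (2*n+1) =>
        if (i:ℕ) = 2*n then h
        else if (i:ℕ) % 2 = 0 then z * m (n - (i:ℕ)/2)
        else l (n - 1 - (i:ℕ)/2))) := by
  intro n
  induction n with
  | zero =>
    intro _ _
    refine ⟨by rw [hp0]; exact hh, by rw [hq0]; exact one_pos, ?_⟩
    have : List.ofFn (fun i : Fin (2*0+1) =>
        if (i:ℕ) = 2*0 then h
        else if (i:ℕ) % 2 = 0 then z * m (0 - (i:ℕ)/2)
        else l (0 - 1 - (i:ℕ)/2)) = [h] := by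
      simp [List.ofFn_succ]
    rw [this, hp0, hq0]
    simp [cfracL]
  | succ n ih =>
    intro hm hlpos
    obtain ⟨hpn, hqn, hcf⟩ := ih (fun j h1 h2 => hm j h1 (Nat.le_succ_of_le h2))
      (fun j hj => hlpos j (Nat.lt_succ_of_lt hj))
    have hln : 0 < l n := hlpos n (Nat.lt_succ_self n)
    have hmn : 0 < m (n+1) := hm (n+1) (Nat.le_add_left 1 n) le_rfl
    have hq' : 0 < q (n+1) := by
      rw [hq n]; positivity
    have hp' : 0 < p (n+1) := by
      rw [hp n]; positivity
    refine ⟨hp', hq', ?_⟩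
    rw [ofFn_step, cfracL, cfracL, ← hcf]
    have h1 : l n + q n / p n = q (n+1) / p n := by
      rw [hq n]; field_simp; ring
    rw [h1]
    rw [hp n, hq n]
    have hpn' : p n ≠ 0 := ne_of_gt hpn
    have hq'' : q n + p n * l n ≠ 0 := by
      have := hq' ; rw [hq n] at this; exact ne_of_gt this
    have hden : p n + z * m (n+1) * (q n + p n * l n) ≠ 0 := by
      have := hp' ; rw [hp n, hq n] at this; exact ne_of_gt this
    rw [one_div_div, add_div' _ _ _ hq'', one_div_div]
    ring_nf

/-- The discrete string with masses `m₁,…,mₙ > 0` at `0 < x₁ < ⋯ < xₙ < 1`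
(`x₀ = 0`, `x_{n+1} = 1`, gaps `lⱼ = x_{j+1} - xⱼ`), and the piecewise-linear solution
`φ = pⱼ(x - xⱼ) + qⱼ` on `Iⱼ` with `p₀ = h`, `q₀ = 1`, continuity
`q_{j+1} = qⱼ + pⱼ lⱼ` and jump condition `p_{j+1} = pⱼ - (-z) m_{j+1} q_{j+1}`
(the recursion evaluated at spectral parameter `-z`, `z > 0`).  Then the Weyl
function satisfies
`-W(-z) = (pₙ lₙ + qₙ)/pₙ = lₙ + 1/(z mₙ + 1/(l_{n-1} + 1/(⋯ + 1/(l₀ + 1/h))))`. -/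
theorem weyl_continued_fraction (n : ℕ) (h z : ℝ) (hh : 0 < h) (hz : 0 < z)
    (x : ℕ → ℝ) (hx0 : x 0 = 0) (hxend : x (n+1) = 1)
    (hmono : ∀ i ≤ n, x i < x (i+1))
    (l : ℕ → ℝ) (hl : ∀ j, l j = x (j+1) - x j)
    (m : ℕ → ℝ) (hm : ∀ j, 1 ≤ j → j ≤ n → 0 < m j)
    (p q : ℕ → ℝ) (hp0 : p 0 = h) (hq0 : q 0 = 1)
    (hq : ∀ j, q (j+1) = q j + p j * l j)
    (hp : ∀ j, p (j+1) = p j + z * m (j+1) * q (j+1)) :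
    (p n * l n + q n) / p n =
      l n + cfracL (List.ofFn (fun i : Fin (2*n+1) =>
        if (i:ℕ) = 2*n then h
        else if (i:ℕ) % 2 = 0 then z * m (n - (i:ℕ)/2)
        else l (n - 1 - (i:ℕ)/2))) := by
  have hlpos : ∀ j, j < n → 0 < l j := by
    intro j hj
    rw [hl j]
    exact sub_pos.mpr (hmono j (le_of_lt hj))
  obtain ⟨hpn, hqn, hcf⟩ := key h z hh hz l m p q hp0 hq0 hq hp n hm hlpos
  rw [← hcf]
  field_simp
end
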